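/- For every x > 0, (1 + 1/x)^(x+1/2) > e. -/

import Mathlib

open Real Set

private lemma key_log (t : ℝ) (ht : 0 < t) : 2 * t / (2 + t) < Real.log (1 + t) := by
  set f : ℝ → ℝ := fun t => Real.log (1 + t) - 2 * t / (2 + t) with hf
  have hderiv : ∀ s : ℝ, 0 ≤ s → HasDerivAt f (1 / (1 + s) - 4 / (2 + s) ^ 2) s := by
    intro s hs
    have h1 : (1 : ℝ) + s ≠ 0 := by positivity
    have h2 : (2 : ℝ) + s ≠ 0 := by positivity
    have hlog : HasDerivAt (fun u : ℝ => Real.log (1 + u)) (1 / (1 + s)) s := by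
      have := ((hasDerivAt_id s).const_add 1).log h1
      simpa [one_div] using this
    have hq : HasDerivAt (fun u : ℝ => 2 * u / (2 + u)) (4 / (2 + s) ^ 2) s := by
      have hnum : HasDerivAt (fun u : ℝ => 2 * u) 2 s := by
        simpa using (hasDerivAt_id s).const_mul (2 : ℝ)
      have hden : HasDerivAt (fun u : ℝ => 2 + u) 1 s := (hasDerivAt_id s).const_add 2
      have := hnum.div hden h2
      rw [show (4:ℝ) / (2 + s) ^ 2 = (2 * (2 + s) - 2 * s * 1) / (2 + s) ^ 2 by ring]
      exact this
    exact hlog.sub hq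
  have hmono : StrictMonoOn f (Ici (0 : ℝ)) := by
    apply strictMonoOn_of_deriv_pos (convex_Ici 0)
    · apply ContinuousOn.sub
      · apply ContinuousOn.log (by fun_prop)
        intro u hu
        have : (0 : ℝ) ≤ u := hu
        positivity
      · apply ContinuousOn.div (by fun_prop) (by fun_prop)
        intro u hu
        have : (0 : ℝ) ≤ u := hu
        positivity
    · intro s hs
      rw [interior_Ici] at hs
      have hs' : 0 < s := hs
      rw [(hderiv s hs'.le).deriv]
      rw [sub_pos, div_lt_div_iff₀ (by positivity) (by positivity)]
      nlinarith [sq_nonneg s]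
  have h0 : f 0 = 0 := by simp [hf]
  have := hmono (self_mem_Ici) (show t ∈ Ici (0:ℝ) from ht.le) ht
  rw [h0] at this
  simp only [hf] at this
  linarith

theorem h1_gt_e (x : ℝ) (hx : 0 < x) :
    Real.exp 1 < (1 + 1 / x) ^ (x + 1 / 2) := by
  have hb : (0 : ℝ) < 1 + 1 / x := by positivity
  rw [Real.rpow_def_of_pos hb, Real.exp_lt_exp]
  have hk := key_log (1 / x) (by positivity)
  have hx2 : 0 < 2 + 1 / x := by positivity
  have h1 : 2 * (1 / x) / (2 + 1 / x) * (x + 1 / 2) = 1 := by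
    field_simp
  calc (1 : ℝ) = 2 * (1 / x) / (2 + 1 / x) * (x + 1 / 2) := h1.symm
    _ < Real.log (1 + 1 / x) * (x + 1 / 2) := by
        apply mul_lt_mul_of_pos_right hk
        positivity
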